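/- Consider the two-step-size restarted subgradient algorithm with constants ε̄' := 0.9, ε := ε'/(1+ε'), ε̄ := ε̄'/(1+ε̄'), B := 1/√e, F := √e, where each inner iteration computes two iterates (one for each of the two simultaneous subgradient sequences). Then there exist an outer index i ≥ 1 and an inner index j with 0 ≤ j ≤ K_i such that the total number of iterates computed prior to and including x_{i,j}, namely 2(Σ_{i'=1}^{i−1} K_{i'} + j), does not exceed 18 M² G² ( 2.7 ln(1 + (f(x⁰) − f*)/(f* − f_slb)) + ((1+ε')/ε')² ), and (f(x_{i,j}) − f*)/(f* − f_slb) ≤ ε'. -/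

import Mathlib

open scoped RealInnerProductSpace Classical

set_option maxHeartbeats 1000000

/-- `p` is the Euclidean projection of `u` onto `Q`. -/
def IsProj {n : ℕ} (Q : Set (EuclideanSpace ℝ (Fin n)))
    (u p : EuclideanSpace ℝ (Fin n)) : Prop :=
  p ∈ Q ∧ ∀ w ∈ Q, dist p u ≤ dist w u


lemma proj_contract {n : ℕ} {Q : Set (EuclideanSpace ℝ (Fin n))} (hQcv : Convex ℝ Q)
    {u p w : EuclideanSpace ℝ (Fin n)} (hp : IsProj Q u p) (hw : w ∈ Q) :
    ‖p - w‖ ≤ ‖u - w‖ := by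
  obtain ⟨hpQ, hmin⟩ := hp
  have hobtuse : ⟪u - p, w - p⟫ ≤ 0 := by
    by_contra hcon
    push_neg at hcon
    set s : ℝ := ⟪u - p, w - p⟫ with hs
    have hwp : (0:ℝ) < ‖w - p‖ ^ 2 := by
      rcases eq_or_ne w p with h | h
      · exfalso; rw [hs, h] at hcon; simp at hcon
      · have : w - p ≠ 0 := sub_ne_zero.mpr h
        exact pow_pos (norm_pos_iff.mpr this) 2
    set t : ℝ := min 1 (s / ‖w - p‖ ^ 2) with ht
    have ht0 : 0 < t := lt_min one_pos (by positivity)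
    have ht1 : t ≤ 1 := min_le_left _ _
    have hts : t * ‖w - p‖ ^ 2 ≤ s := by
      have : t ≤ s / ‖w - p‖ ^ 2 := min_le_right _ _
      calc t * ‖w - p‖ ^ 2 ≤ (s / ‖w - p‖ ^ 2) * ‖w - p‖ ^ 2 := by
            apply mul_le_mul_of_nonneg_right this hwp.le
        _ = s := by rw [div_mul_cancel₀ _ hwp.ne']
    have hyQ : p + t • (w - p) ∈ Q := by
      have := hQcv hpQ hw (by linarith : (0:ℝ) ≤ 1 - t) ht0.le (by ring)
      have heq : (1 - t) • p + t • w = p + t • (w - p) := by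
        rw [smul_sub, sub_smul, one_smul]; abel
      rwa [heq] at this
    have hd := hmin _ hyQ
    rw [dist_eq_norm, dist_eq_norm] at hd
    have hsq : ‖p - u‖ ^ 2 ≤ ‖p + t • (w - p) - u‖ ^ 2 := by
      have h0 := norm_nonneg (p - u)
      nlinarith
    have hexp : ‖p + t • (w - p) - u‖ ^ 2
        = ‖p - u‖ ^ 2 + 2 * (t * ⟪p - u, w - p⟫) + t ^ 2 * ‖w - p‖ ^ 2 := by
      have h1 := norm_add_sq_real (p - u) (t • (w - p))
      have he : p - u + t • (w - p) = p + t • (w - p) - u := by abel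
      rw [he, real_inner_smul_right, norm_smul] at h1
      rw [h1, mul_pow, Real.norm_eq_abs, sq_abs]
    have hpu : ⟪p - u, w - p⟫ = -s := by
      rw [hs, ← inner_neg_left]; congr 1; abel
    rw [hexp, hpu] at hsq
    -- 0 ≤ -2 t s + t^2 ‖w-p‖^2, and t ‖w-p‖^2 ≤ s, t > 0
    nlinarith [hsq, mul_le_mul_of_nonneg_left hts ht0.le]
  have hexp : ‖u - w‖ ^ 2 = ‖u - p‖ ^ 2 + 2 * ⟪u - p, p - w⟫ + ‖p - w‖ ^ 2 := by
    have h1 := norm_add_sq_real (u - p) (p - w)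
    have he : u - p + (p - w) = u - w := by abel
    rw [he] at h1; linarith
  have h2 : ⟪u - p, p - w⟫ = - ⟪u - p, w - p⟫ := by
    rw [← inner_neg_right]; congr 1; abel
  nlinarith [norm_nonneg (u - p), norm_nonneg (p - w), norm_nonneg (u - w)]

lemma step_bound {n : ℕ} {Q : Set (EuclideanSpace ℝ (Fin n))} (hQcv : Convex ℝ Q)
    {f : EuclideanSpace ℝ (Fin n) → ℝ} {y p gg zopt : EuclideanSpace ℝ (Fin n)} {a : ℝ}
    (ha : 0 ≤ a) (hzQ : zopt ∈ Q)
    (hproj : IsProj Q (y - a • gg) p)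
    (hsg : ∀ w ∈ Q, f y + ⟪gg, w - y⟫ ≤ f w) :
    ‖p - zopt‖ ^ 2 ≤ ‖y - zopt‖ ^ 2 - 2*a*(f y - f zopt) + a^2 * ‖gg‖^2 := by
  have h1 : ‖p - zopt‖ ≤ ‖y - a • gg - zopt‖ := proj_contract hQcv hproj hzQ
  have hexp : ‖y - a • gg - zopt‖ ^ 2
      = ‖y - zopt‖^2 - 2*(a*⟪gg, y - zopt⟫) + a^2*‖gg‖^2 := by
    have h2 := norm_sub_sq_real (y - zopt) (a • gg)
    have he : y - zopt - a • gg = y - a • gg - zopt := by abel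
    rw [he, real_inner_smul_right, norm_smul, mul_pow, Real.norm_eq_abs, sq_abs] at h2
    rw [h2, real_inner_comm]
  have hsg' : f y - f zopt ≤ ⟪gg, y - zopt⟫ := by
    have h3 := hsg zopt hzQ
    have hi : ⟪gg, zopt - y⟫ = - ⟪gg, y - zopt⟫ := by
      rw [← inner_neg_right]; congr 1; abel
    rw [hi] at h3; linarith
  have hsq : ‖p - zopt‖^2 ≤ ‖y - a • gg - zopt‖^2 := by
    nlinarith [norm_nonneg (p - zopt), norm_nonneg (y - a • gg - zopt)]
  rw [hexp] at hsq
  nlinarith [mul_le_mul_of_nonneg_left hsg' ha]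

lemma loop_count {n : ℕ} {Q : Set (EuclideanSpace ℝ (Fin n))} (hQcv : Convex ℝ Q)
    {f : EuclideanSpace ℝ (Fin n) → ℝ} {fstar fslb : ℝ} {G M h m : ℝ}
    (hM : 0 < M) (hh : 0 < h) (hm : 0 < m) (hG : 0 < G)
    (hattain : ∃ z ∈ Q, f z = fstar)
    (hgrow : ∀ z ∈ Q, Metric.infDist z {w ∈ Q | f w = fstar} ≤ G * (f z - fslb))
    (y gg : ℕ → EuclideanSpace ℝ (Fin n)) (N : ℕ)
    (hyQ : ∀ j, j < N → y j ∈ Q)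
    (hsg : ∀ j, j < N → ∀ w ∈ Q, f (y j) + ⟪gg j, w - y j⟫ ≤ f w)
    (hgM : ∀ j, j < N → ‖gg j‖ ≤ M)
    (hup : ∀ j, j < N →
      IsProj Q (y j - (if gg j = 0 then 0 else h / ‖gg j‖^2) • gg j) (y (j+1)))
    (hmargin : ∀ j, j < N → m ≤ 2*(f (y j) - fstar) - h) :
    (N:ℝ) * (h * m) ≤ M^2 * G^2 * (f (y 0) - fslb)^2 := by
  rcases Nat.eq_zero_or_pos N with hN0 | hNpos
  · rw [hN0]
    have h0 : (0:ℝ) ≤ M^2*G^2*(f (y 0) - fslb)^2 := by positivity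
    push_cast
    linarith
  obtain ⟨zm, hzmQ, hzmf⟩ := hattain
  have hSne : ({w ∈ Q | f w = fstar} : Set (EuclideanSpace ℝ (Fin n))).Nonempty :=
    ⟨zm, hzmQ, hzmf⟩
  set d : ℝ := h * m / M ^ 2 with hd
  have hd0 : 0 < d := by positivity
  have key : ∀ z ∈ Q, f z = fstar → ∀ j, j ≤ N →
      ‖y j - z‖ ^ 2 ≤ ‖y 0 - z‖ ^ 2 - j * d := by
    intro z hzQ hzf j
    induction j with
    | zero => intro _; simp
    | succ j ih =>
      intro hj
      have hjN : j < N := by omega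
      have hprev := ih (by omega)
      -- gg j ≠ 0
      have hgne : gg j ≠ 0 := by
        intro hgg
        have h3 := hsg j hjN z hzQ
        have hz0 : ⟪gg j, z - y j⟫ = (0:ℝ) := by rw [hgg]; exact inner_zero_left _
        rw [hz0, hzf] at h3
        have h4 := hmargin j hjN
        linarith
      have hgpos : 0 < ‖gg j‖ ^ 2 := pow_pos (norm_pos_iff.mpr hgne) 2
      set a : ℝ := h / ‖gg j‖ ^ 2 with ha
      have ha0 : 0 < a := by positivity
      have hupj := hup j hjN
      rw [if_neg hgne] at hupj
      have hstep := step_bound hQcv ha0.le hzQ hupj (hsg j hjN)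
      rw [hzf] at hstep
      have hah : a * ‖gg j‖ ^ 2 = h := by
        rw [ha]; field_simp
      have hgM2 : ‖gg j‖ ^ 2 ≤ M ^ 2 := by
        nlinarith [hgM j hjN, norm_nonneg (gg j)]
      have haM : h / M ^ 2 ≤ a := by
        rw [ha, div_eq_mul_inv, div_eq_mul_inv]
        apply mul_le_mul_of_nonneg_left _ hh.le
        rw [← one_div, ← one_div]
        exact one_div_le_one_div_of_le hgpos hgM2
      have hmarg := hmargin j hjN
      have hdec : ‖y (j+1) - z‖ ^ 2 ≤ ‖y j - z‖ ^ 2 - d := by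
        have h5 : a ^ 2 * ‖gg j‖ ^ 2 = a * h := by
          rw [pow_two, mul_assoc, hah]
        have h6 : d ≤ a * m := by
          rw [hd]
          calc h * m / M ^ 2 = (h / M ^ 2) * m := by ring
            _ ≤ a * m := mul_le_mul_of_nonneg_right haM hm.le
        nlinarith [mul_le_mul_of_nonneg_left hmarg ha0.le]
      calc ‖y (j+1) - z‖ ^ 2 ≤ ‖y j - z‖ ^ 2 - d := hdec
        _ ≤ ‖y 0 - z‖ ^ 2 - j * d - d := by linarith
        _ = ‖y 0 - z‖ ^ 2 - (j+1 : ℕ) * d := by push_cast; ring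
  have hbound : ∀ z ∈ Q, f z = fstar → (N:ℝ) * d ≤ dist (y 0) z ^ 2 := by
    intro z hzQ hzf
    have := key z hzQ hzf N (le_refl N)
    have h0 : (0:ℝ) ≤ ‖y N - z‖ ^ 2 := sq_nonneg _
    rw [dist_eq_norm]
    linarith
  have hsq : Real.sqrt ((N:ℝ) * d) ≤ Metric.infDist (y 0) {w ∈ Q | f w = fstar} := by
    by_contra hcon
    push_neg at hcon
    obtain ⟨z, hzS, hzlt⟩ := (Metric.infDist_lt_iff hSne).mp hcon
    have hb := hbound z hzS.1 hzS.2
    have : Real.sqrt ((N:ℝ) * d) ≤ dist (y 0) z := by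
      rw [← Real.sqrt_sq dist_nonneg]
      exact Real.sqrt_le_sqrt hb
    linarith
  have hy0Q : y 0 ∈ Q := hyQ 0 hNpos
  have hgr := hgrow (y 0) hy0Q
  have hfin : Real.sqrt ((N:ℝ) * d) ≤ G * (f (y 0) - fslb) := le_trans hsq hgr
  have hNd : (N:ℝ) * d ≤ (G * (f (y 0) - fslb)) ^ 2 := by
    have h0 : 0 ≤ (N:ℝ) * d := by positivity
    calc (N:ℝ) * d = Real.sqrt ((N:ℝ)*d) ^ 2 := (Real.sq_sqrt h0).symm
      _ ≤ (G * (f (y 0) - fslb)) ^ 2 := by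
          have h1 : (0:ℝ) ≤ Real.sqrt ((N:ℝ)*d) := Real.sqrt_nonneg _
          nlinarith [hfin]
  have hM2 : (0:ℝ) < M ^ 2 := by positivity
  rw [hd] at hNd
  calc (N:ℝ) * (h*m) = ((N:ℝ) * (h*m/M^2)) * M^2 := by field_simp
    _ ≤ (G * (f (y 0) - fslb))^2 * M^2 := mul_le_mul_of_nonneg_right hNd hM2.le
    _ = M^2 * G^2 * (f (y 0) - fslb)^2 := by ring


lemma keyS (sv E : ℝ) (hs0 : 0 < sv) (hsq : sv^2 = E) (h1 : (2.7182818283:ℝ) < E)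
    (h2 : E < 2.7182818286) : (1.6:ℝ) ≤ sv ∧ sv ≤ 1.65 := by
  constructor
  · nlinarith
  · nlinarith

lemma keyT (tv E : ℝ) (hu : tv^2 * E = 1) (h1 : (2.718:ℝ) < E) (h2 : E < 2.719) :
    (0.3677:ℝ) ≤ tv^2 ∧ tv^2 ≤ 0.368 := by
  have h0 : 0 ≤ tv^2 := sq_nonneg tv
  constructor
  · nlinarith
  · nlinarith

lemma key1 (t di dl : ℝ) (ht : 0 < t) (hdi : 0 < di) (hul : (0.3677:ℝ) ≤ t^2)
    (huu : t^2 ≤ (0.368:ℝ)) (hdl : dl ≤ t^3*di) :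
    (2/15)*di^2 ≤ ((9/19)*di*t) * (2*(t*di - dl) - (9/19)*di*t) := by
  have key : (2/15 : ℝ) ≤ (9/19) * (2 - 2*t^2 - 9/19) * t^2 := by
    nlinarith [mul_nonneg (sub_nonneg.mpr hul) (sub_nonneg.mpr huu)]
  have h2 : (2*t - 2*t^3 - (9/19)*t) * di ≤ 2*(t*di - dl) - (9/19)*di*t := by nlinarith
  calc (2/15)*di^2 ≤ ((9/19) * (2 - 2*t^2 - 9/19) * t^2) * di^2 := by nlinarith [sq_nonneg di]
    _ = ((9/19)*di*t) * ((2*t - 2*t^3 - (9/19)*t) * di) := by ring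
    _ ≤ ((9/19)*di*t) * (2*(t*di - dl) - (9/19)*di*t) := by
        apply mul_le_mul_of_nonneg_left h2 (by positivity)

lemma key2 (hh mm di : ℝ) (hhp : 0 < hh) (hdi : 0 < di) (h : (2/15)*di^2 ≤ hh*mm) :
    0 < mm := by
  rcases mul_pos_iff.mp (lt_of_lt_of_le (by positivity) h) with ⟨_, h2⟩ | ⟨h2, _⟩
  · exact h2
  · linarith

lemma key3 (N MG di : ℝ) (hN : 0 ≤ N) (hdi : 0 < di) (h : N*((2/15)*di^2) ≤ MG*di^2) :
    N ≤ 7.5*MG := by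
  have h2 : (N*(2/15))*di^2 ≤ MG*di^2 := by nlinarith
  have h3 := le_of_mul_le_mul_right h2 (pow_pos hdi 2)
  linarith

lemma key4 (e' X dl v : ℝ) (he' : 0 < e') (h1 : (1+e')*dl < X) (hv : X - dl ≤ v) :
    e'*X/(1+e') ≤ v := by
  rw [div_le_iff₀ (by linarith)]
  nlinarith

lemma key5 (e' dl X : ℝ) (he' : 0 < e') (h : X ≤ (1+e')*dl) :
    e'*X/(1+e') ≤ e'*dl := by
  rw [div_le_iff₀ (by linarith)]
  nlinarith

lemma keyJB (s t e' G M di hh : ℝ) (ht : 0 < t) (hts : t*s = 1) (he' : 0 < e')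
    (hhh : hh = e'*(t*di)/(1+e')) :
    (s^2*(G^2*M^2)*(1+e')^2/e'^2) * (hh*hh) = M^2*G^2*di^2 := by
  have h2 : s^2*t^2 = 1 := by
    calc s^2*t^2 = (t*s)^2 := by ring
      _ = 1 := by rw [hts]; norm_num
  have he'1 : (0:ℝ) < 1 + e' := by linarith
  subst hhh
  field_simp
  linear_combination (M^2*G^2*di^2) * h2

lemma keyJA (s t e' G M di dl hh : ℝ) (ht : 0 < t) (hs : 0 < s) (hts : t*s = 1) (he' : 0 < e')
    (hdl : 0 < dl) (hdi : 0 < di) (hM : 0 < M) (hG : 0 < G)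
    (hhh : hh = e'*(t*di)/(1+e')) (hrange : di ≤ (1+e')*s*dl) :
    M^2*G^2*di^2 ≤ (s^2*(G^2*M^2)*(1+e')^2/e'^2) * (hh*(e'*dl)) := by
  have hseq : s^2*t = s := by
    calc s^2*t = s*(t*s) := by ring
      _ = s := by rw [hts, mul_one]
  have he'1 : (0:ℝ) < 1 + e' := by linarith
  have heq : (s^2*(G^2*M^2)*(1+e')^2/e'^2) * (hh*(e'*dl)) = M^2*G^2*((1+e')*s*dl)*di := by
    subst hhh
    field_simp
    linear_combination hts
  rw [heq]
  nlinarith [mul_pos (mul_pos (pow_pos hM 2) (pow_pos hG 2)) hdi]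

lemma keyFinal (Gv Mv Y L E ia : ℝ) (hP : 0 ≤ Gv^2*Mv^2) (hY : 0 ≤ Y) (hL : 0 ≤ L)
    (hia : ia ≤ 2*L) (hE3 : E < 3) :
    2*(ia*(7.5*(Gv^2*Mv^2)) + 3*(E*(Gv^2*Mv^2)*Y)) ≤ 18*Mv^2*Gv^2*(2.7*L + Y) := by
  nlinarith [mul_nonneg (by linarith : (0:ℝ) ≤ 2*L - ia) hP,
    mul_nonneg (by linarith : (0:ℝ) ≤ 3 - E) (mul_nonneg hP hY), mul_nonneg hL hP]


/-- Theorem: complexity bound for the Non-Smooth Method with Two Step-Size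
Rules Running Simultaneously, Algorithm 3. -/
theorem two_stepsize_subgradient_complexity {n : ℕ} (Q : Set (EuclideanSpace ℝ (Fin n)))
    (hQne : Q.Nonempty) (hQcl : IsClosed Q) (hQcv : Convex ℝ Q)
    (f : EuclideanSpace ℝ (Fin n) → ℝ) (hfc : ConvexOn ℝ Q f)
    (fstar : ℝ) (hattain : ∃ z ∈ Q, f z = fstar) (hmin : ∀ z ∈ Q, fstar ≤ f z)
    (fslb : ℝ) (hslb : fslb < fstar)
    (G M : ℝ) (hG : 0 < G)
    (hgrow : ∀ z ∈ Q, Metric.infDist z {w ∈ Q | f w = fstar} ≤ G * (f z - fslb))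
    (ε' : ℝ) (hε' : 0 < ε')
    (B F εb' ε εb : ℝ)
    (hB : B = (Real.sqrt (Real.exp 1))⁻¹) (hF : F = Real.sqrt (Real.exp 1))
    (hεb' : εb' = 0.9) (hε : ε = ε' / (1 + ε')) (hεb : εb = εb' / (1 + εb'))
    (x xb g gb : ℕ → ℕ → EuclideanSpace ℝ (Fin n)) (K : ℕ → ℕ∞)
    (x0 : EuclideanSpace ℝ (Fin n)) (hx0 : x0 ∈ Q)
    (hx10 : x 1 0 = x0) (hxb10 : xb 1 0 = x0)
    (hmem : ∀ i j : ℕ, 1 ≤ i → (j : ℕ∞) ≤ K i → x i j ∈ Q ∧ xb i j ∈ Q)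
    (hKlt : ∀ i j : ℕ, 1 ≤ i → (j : ℕ∞) < K i →
      B ≤ (f (x i j) - fslb) / (f (x i 0) - fslb) ∧
      B ≤ (f (xb i j) - fslb) / (f (xb i 0) - fslb))
    (hsub : ∀ i j : ℕ, 1 ≤ i → (j : ℕ∞) < K i →
      (∀ w ∈ Q, f (x i j) + ⟪g i j, w - x i j⟫ ≤ f w) ∧
      (∀ w ∈ Q, f (xb i j) + ⟪gb i j, w - xb i j⟫ ≤ f w) ∧
      ‖g i j‖ ≤ M ∧ ‖gb i j‖ ≤ M)
    (hupd : ∀ i j : ℕ, 1 ≤ i → (j : ℕ∞) < K i →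
      IsProj Q (x i j - (if g i j = 0 then 0
          else ε * (f (x i 0) - fslb) / (F * ‖g i j‖ ^ 2)) • g i j) (x i (j + 1)) ∧
      IsProj Q (xb i j - (if gb i j = 0 then 0
          else εb * (f (xb i 0) - fslb) / (F * ‖gb i j‖ ^ 2)) • gb i j) (xb i (j + 1)))
    (hKeq : ∀ i j : ℕ, 1 ≤ i → K i = (j : ℕ∞) →
      ((f (x i j) - fslb) / (f (x i 0) - fslb) < B ∧
        x (i + 1) 0 = x i j ∧ xb (i + 1) 0 = x i j) ∨
      (B ≤ (f (x i j) - fslb) / (f (x i 0) - fslb) ∧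
        (f (xb i j) - fslb) / (f (xb i 0) - fslb) < B ∧
        x (i + 1) 0 = xb i j ∧ xb (i + 1) 0 = xb i j)) :
    ∃ i j : ℕ, 1 ≤ i ∧ (j : ℕ∞) ≤ K i ∧ (∀ i' : ℕ, 1 ≤ i' → i' < i → K i' ≠ ⊤) ∧
      (2 * ((∑ i' ∈ Finset.Icc 1 (i - 1), (K i').toNat) + j) : ℝ) ≤
        18 * M ^ 2 * G ^ 2 *
          (2.7 * Real.log (1 + (f x0 - fstar) / (fstar - fslb)) + ((1 + ε') / ε') ^ 2) ∧
      (f (x i j) - fstar) / (fstar - fslb) ≤ ε' := by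
    classical
  set s : ℝ := Real.sqrt (Real.exp 1) with hsdef
  set δ : ℝ := fstar - fslb with hδdef
  have hδ : 0 < δ := sub_pos.mpr hslb
  obtain ⟨zm, hzmQ, hzmf⟩ := hattain
  have he1 : (2.7182818283 : ℝ) < Real.exp 1 := Real.exp_one_gt_d9
  have he2 : Real.exp 1 < (2.7182818286 : ℝ) := Real.exp_one_lt_d9
  have hs0 : 0 < s := Real.sqrt_pos.mpr (Real.exp_pos 1)
  have hssq : s ^ 2 = Real.exp 1 := Real.sq_sqrt (Real.exp_pos 1).le
  have hs12 := keyS s (Real.exp 1) hs0 hssq he1 he2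
  have hs1 : (1.6:ℝ) ≤ s := hs12.1
  have hs2 : s ≤ (1.65:ℝ) := hs12.2
  have hs1' : (1:ℝ) < s := by linarith
  have hεb19 : εb = 9/19 := by rw [hεb, hεb']; norm_num
  have hε'1 : (0:ℝ) < 1 + ε' := by linarith
  have hε0 : 0 < ε := by rw [hε]; positivity
  have hεval : ε = ε' / (1 + ε') := hε
  have hlogs : Real.log s = 1/2 := by
    rw [hsdef, Real.log_sqrt (Real.exp_pos 1).le, Real.log_exp]
  -- basic membership and positivity
  have hxQ : ∀ i : ℕ, 1 ≤ i → x i 0 ∈ Q ∧ xb i 0 ∈ Q := by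
    intro i hi
    exact hmem i 0 hi (by simp)
  have hDδ : ∀ i : ℕ, 1 ≤ i → δ ≤ f (x i 0) - fslb := by
    intro i hi
    have := hmin _ (hxQ i hi).1
    rw [hδdef]; linarith
  have hDpos : ∀ i : ℕ, 1 ≤ i → 0 < f (x i 0) - fslb := by
    intro i hi; linarith [hDδ i hi]
  -- K 1 ≠ 0
  have hK1 : K 1 ≠ 0 := by
    intro h0
    have h1 := hKeq 1 0 (le_refl 1) (by simpa using h0)
    have hd1 : 0 < f (x 1 0) - fslb := hDpos 1 (le_refl 1)
    have hB1 : B < 1 := by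
      rw [hB]; exact inv_lt_one_of_one_lt₀ hs1'
    rcases h1 with ⟨hr, _⟩ | ⟨_, hr, _⟩
    · rw [div_self (ne_of_gt hd1)] at hr; linarith
    · rw [hxb10, ← hx10, div_self (ne_of_gt hd1)] at hr; linarith
  have hK1pos : (0:ℕ∞) < K 1 := pos_iff_ne_zero.mpr hK1
  -- M ≥ 0, and handle M = 0
  have hsub10 := hsub 1 0 (le_refl 1) (by simpa using hK1pos)
  have hMnn : 0 ≤ M := le_trans (norm_nonneg _) hsub10.2.2.1
  rcases eq_or_lt_of_le hMnn with hM0 | hMpos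
  · -- M = 0 : the subgradient at x 1 0 is zero, so x 1 0 is optimal
    have hg0 : g 1 0 = 0 := by
      have := hsub10.2.2.1
      rw [← hM0] at this
      exact norm_le_zero_iff.mp this
    have hfx10 : f (x 1 0) = fstar := by
      have h1 := hsub10.1 zm hzmQ
      rw [hg0] at h1
      have h2 : ⟪(0:EuclideanSpace ℝ (Fin n)), zm - x 1 0⟫ = (0:ℝ) := inner_zero_left _
      rw [h2, hzmf] at h1
      exact le_antisymm (by linarith) (hmin _ (hxQ 1 (le_refl 1)).1)
    refine ⟨1, 0, le_refl 1, by simp, by omega, ?_, ?_⟩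
    · simp only [Nat.sub_self, Finset.Icc_self]
      rw [← hM0]
      norm_num
    · rw [hfx10]; simp; positivity
  -- ==================== M > 0 from here on ====================
  set CA : ℝ := 7.5 * (G^2 * M^2) with hCA
  set J : ℝ := Real.exp 1 * (G^2 * M^2) * (1+ε')^2 / ε'^2 with hJ
  have hCA0 : 0 ≤ CA := by rw [hCA]; positivity
  have hJ0 : 0 < J := by rw [hJ]; positivity
  -- inverse of s
  set t : ℝ := s⁻¹ with htdef
  have htpos : 0 < t := by rw [htdef]; positivity
  have hts : t * s = 1 := inv_mul_cancel₀ (ne_of_gt hs0)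
  have hu : t^2 * Real.exp 1 = 1 := by
    rw [← hssq]
    calc t^2 * s^2 = (t*s)^2 := by ring
      _ = 1 := by rw [hts]; norm_num
  have heL : (2.718:ℝ) < Real.exp 1 := by linarith
  have heU : Real.exp 1 < (2.719:ℝ) := by linarith
  have hulu := keyT t (Real.exp 1) hu heL heU
  have hul : (0.3677:ℝ) ≤ t^2 := hulu.1
  have huu : t^2 ≤ (0.368:ℝ) := hulu.2
  -- restart decrease
  have hdrop : ∀ i k : ℕ, 1 ≤ i → x i 0 = xb i 0 → K i = (k:ℕ∞) →
      f (x (i+1) 0) - fslb < t * (f (x i 0) - fslb) ∧ x (i+1) 0 = xb (i+1) 0 := by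
    intro i k hi hxeq hK
    have hDi := hDpos i hi
    rcases hKeq i k hi hK with ⟨hr, hx1, hx2⟩ | ⟨_, hr, hx1, hx2⟩
    · rw [div_lt_iff₀ hDi, hB] at hr
      exact ⟨by rw [hx1]; exact hr, by rw [hx1, hx2]⟩
    · rw [← hxeq, div_lt_iff₀ hDi, hB] at hr
      exact ⟨by rw [hx1]; exact hr, by rw [hx1, hx2]⟩
  -- regime A : δ small relative to D i, the εb-sequence forces a restart quickly
  have hregA : ∀ i : ℕ, 1 ≤ i → x i 0 = xb i 0 →
      δ ≤ t^3 * (f (x i 0) - fslb) →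
      ∃ k : ℕ, K i = (k:ℕ∞) ∧ (k:ℝ) ≤ CA := by
    intro i hi hxeq hA
    set Di : ℝ := f (x i 0) - fslb with hDi
    have hDipos : 0 < Di := hDpos i hi
    set hh : ℝ := εb * Di / s with hhdef
    have hhval : hh = (9/19) * Di * t := by
      rw [hhdef, hεb19, htdef]; field_simp
    have hhpos : 0 < hh := by rw [hhval]; positivity
    set mm : ℝ := 2 * (t * Di - δ) - hh with hmmdef
    have hmm2 : (2/15) * Di^2 ≤ hh * mm := by
      rw [hmmdef, hhval]
      exact key1 t Di δ htpos hDipos hul huu hA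
    have hmmpos : 0 < mm := key2 hh mm Di hhpos hDipos hmm2
    have hcount : ∀ N : ℕ, (N:ℕ∞) ≤ K i → (N:ℝ) ≤ CA := by
      intro N hN
      have hjK : ∀ j : ℕ, j < N → (j:ℕ∞) < K i := fun j hj =>
        lt_of_lt_of_le (Nat.cast_lt.mpr hj) hN
      have hmain := loop_count (Q := Q) hQcv (f := f) (fstar := fstar) (fslb := fslb)
        (G := G) (M := M) (h := hh) (m := mm) hMpos hhpos hmmpos hG ⟨zm, hzmQ, hzmf⟩ hgrow
        (fun j => xb i j) (fun j => gb i j) N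
        (fun j hj => (hmem i j hi (le_of_lt (hjK j hj))).2)
        (fun j hj => (hsub i j hi (hjK j hj)).2.1)
        (fun j hj => (hsub i j hi (hjK j hj)).2.2.2)
        (fun j hj => by
          have h2 := (hupd i j hi (hjK j hj)).2
          have heq : (if gb i j = 0 then (0:ℝ)
              else εb * (f (xb i 0) - fslb) / (F * ‖gb i j‖ ^ 2))
              = (if gb i j = 0 then (0:ℝ) else hh / ‖gb i j‖^2) := by
            split_ifs with hgz
            · rfl
            · rw [hF, ← hxeq, hhdef, div_div]
          rw [heq] at h2
          exact h2)
        (fun j hj => by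
          have hKj := (hKlt i j hi (hjK j hj)).2
          rw [← hxeq, hB, le_div_iff₀ hDipos] at hKj
          have hfj : t * Di - δ ≤ f (xb i j) - fstar := by
            rw [hδdef]; linarith
          rw [hmmdef]; linarith)
      have hxb0 : f (xb i 0) - fslb = Di := by rw [← hxeq]
      rw [hxb0] at hmain
      have h5 : (N:ℝ) * ((2/15)*Di^2) ≤ (M^2*G^2)*Di^2 := by
        calc (N:ℝ) * ((2/15)*Di^2) ≤ (N:ℝ) * (hh*mm) :=
              mul_le_mul_of_nonneg_left hmm2 (Nat.cast_nonneg N)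
          _ ≤ M^2*G^2*Di^2 := hmain
          _ = (M^2*G^2)*Di^2 := by ring
      have h6 := key3 (N:ℝ) (M^2*G^2) Di (Nat.cast_nonneg N) hDipos h5
      rw [hCA]
      linarith
    have hKne : K i ≠ ⊤ := by
      intro htop
      obtain ⟨N, hNgt⟩ := exists_nat_gt CA
      have := hcount N (by rw [htop]; exact le_top)
      linarith
    exact ⟨(K i).toNat, (ENat.coe_toNat hKne).symm,
      hcount _ (le_of_eq (ENat.coe_toNat hKne))⟩
  -- case B : D i is large relative to δ (above the (1+ε')sδ threshold): ε-sequence forces restart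
  have hcaseB : ∀ i : ℕ, 1 ≤ i → (1+ε')*s*δ < f (x i 0) - fslb →
      ∃ k : ℕ, K i = (k:ℕ∞) ∧ (k:ℝ) ≤ J := by
    intro i hi hbig
    set Di : ℝ := f (x i 0) - fslb with hDi
    have hDipos : 0 < Di := hDpos i hi
    set hh : ℝ := ε * Di / s with hhdef
    have hhX : hh = ε'*(t*Di)/(1+ε') := by
      rw [hhdef, hεval, htdef]
      field_simp
    have hhpos : 0 < hh := by rw [hhdef]; positivity
    have hmargin : ∀ j : ℕ, (j:ℕ∞) < K i → hh ≤ 2*(f (x i j) - fstar) - hh := by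
      intro j hj
      have hKj := (hKlt i j hi hj).1
      rw [hB, le_div_iff₀ hDipos] at hKj
      have hfageq : t*Di - δ ≤ f (x i j) - fstar := by rw [hδdef]; linarith
      have h1 : (1+ε')*δ < t*Di := by
        have h2 := mul_lt_mul_of_pos_left hbig htpos
        have h3 : t*((1+ε')*s*δ) = (1+ε')*δ := by
          calc t*((1+ε')*s*δ) = (t*s)*((1+ε')*δ) := by ring
            _ = (1+ε')*δ := by rw [hts, one_mul]
        linarith
      have h4 := key4 ε' (t*Di) δ (f (x i j) - fstar) hε' h1 hfageq
      rw [← hhX] at h4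
      linarith
    have hcount : ∀ N : ℕ, (N:ℕ∞) ≤ K i → (N:ℝ) ≤ J := by
      intro N hN
      have hjK : ∀ j : ℕ, j < N → (j:ℕ∞) < K i := fun j hj =>
        lt_of_lt_of_le (Nat.cast_lt.mpr hj) hN
      have hmain := loop_count (Q := Q) hQcv (f := f) (fstar := fstar) (fslb := fslb)
        (G := G) (M := M) (h := hh) (m := hh) hMpos hhpos hhpos hG ⟨zm, hzmQ, hzmf⟩ hgrow
        (fun j => x i j) (fun j => g i j) N
        (fun j hj => (hmem i j hi (le_of_lt (hjK j hj))).1)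
        (fun j hj => (hsub i j hi (hjK j hj)).1)
        (fun j hj => (hsub i j hi (hjK j hj)).2.2.1)
        (fun j hj => by
          have h2 := (hupd i j hi (hjK j hj)).1
          have heq : (if g i j = 0 then (0:ℝ)
              else ε * (f (x i 0) - fslb) / (F * ‖g i j‖ ^ 2))
              = (if g i j = 0 then (0:ℝ) else hh / ‖g i j‖^2) := by
            split_ifs with hgz
            · rfl
            · rw [hF, hhdef, div_div]
          rw [heq] at h2
          exact h2)
        (fun j hj => hmargin j (hjK j hj))
      have hJs : J = s^2*(G^2*M^2)*(1+ε')^2/ε'^2 := by rw [hJ, ← hssq]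
      have hJh : J*(hh*hh) = M^2*G^2*Di^2 := by
        rw [hJs]
        exact keyJB s t ε' G M Di hh htpos hts hε' hhX
      have h5 : (N:ℝ)*(hh*hh) ≤ J*(hh*hh) := by rw [hJh]; exact hmain
      exact le_of_mul_le_mul_right h5 (by positivity)
    have hKne : K i ≠ ⊤ := by
      intro htop
      obtain ⟨N, hNgt⟩ := exists_nat_gt J
      have := hcount N (by rw [htop]; exact le_top)
      linarith
    exact ⟨(K i).toNat, (ENat.coe_toNat hKne).symm,
      hcount _ (le_of_eq (ENat.coe_toNat hKne))⟩
  -- case A : D i in the final band: either an iterate succeeds quickly or a restart occurs quickly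
  have hcaseA : ∀ i : ℕ, 1 ≤ i → (1+ε')*δ < f (x i 0) - fslb →
      f (x i 0) - fslb ≤ (1+ε')*s*δ →
      ∃ jf : ℕ, (jf:ℕ∞) ≤ K i ∧ (jf:ℝ) ≤ J ∧
        (f (x i jf) - fstar ≤ ε'*δ ∨ K i = (jf:ℕ∞)) := by
    intro i hi hl hr
    by_cases Hs : ∃ jf : ℕ, (jf:ℕ∞) ≤ K i ∧ (jf:ℝ) ≤ J ∧ f (x i jf) - fstar ≤ ε'*δ
    · obtain ⟨jf, h1, h2, h3⟩ := Hs
      exact ⟨jf, h1, h2, Or.inl h3⟩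
    · push_neg at Hs
      by_cases HK : K i ≤ ((⌊J⌋₊ : ℕ) : ℕ∞)
      · have hKne : K i ≠ ⊤ := by
          intro ht
          rw [ht] at HK
          exact (by simp : ¬ ((⊤:ℕ∞) ≤ ((⌊J⌋₊ : ℕ) : ℕ∞))) HK
        have hKk : K i = (((K i).toNat : ℕ):ℕ∞) := (ENat.coe_toNat hKne).symm
        have hkJ : ((K i).toNat:ℝ) ≤ J := by
          have h2 : (((K i).toNat : ℕ):ℕ∞) ≤ ((⌊J⌋₊ : ℕ) : ℕ∞) := by rw [← hKk]; exact HK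
          have hk2 : (K i).toNat ≤ ⌊J⌋₊ := by exact_mod_cast h2
          calc ((K i).toNat:ℝ) ≤ (⌊J⌋₊:ℝ) := by exact_mod_cast hk2
            _ ≤ J := Nat.floor_le hJ0.le
        exact ⟨(K i).toNat, le_of_eq hKk.symm, hkJ, Or.inr hKk⟩
      · exfalso
        push_neg at HK
        set Di : ℝ := f (x i 0) - fslb with hDi
        have hDipos : 0 < Di := hDpos i hi
        set hh : ℝ := ε * Di / s with hhdef
        have hhX : hh = ε'*(t*Di)/(1+ε') := by
          rw [hhdef, hεval, htdef]
          field_simp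
        have hhpos : 0 < hh := by rw [hhdef]; positivity
        have hhle : hh ≤ ε'*δ := by
          have h1 : t*Di ≤ (1+ε')*δ := by
            have h2 := mul_le_mul_of_nonneg_left hr htpos.le
            have h3 : t*((1+ε')*s*δ) = (1+ε')*δ := by
              calc t*((1+ε')*s*δ) = (t*s)*((1+ε')*δ) := by ring
                _ = (1+ε')*δ := by rw [hts, one_mul]
            linarith
          rw [hhX]
          exact key5 ε' δ (t*Di) hε' h1
        set N : ℕ := ⌊J⌋₊ + 1 with hN
        have hjK : ∀ j : ℕ, j < N → (j:ℕ∞) < K i := by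
          intro j hj
          have hj' : j ≤ ⌊J⌋₊ := by omega
          exact lt_of_le_of_lt (Nat.cast_le.mpr hj') HK
        have hjJ : ∀ j : ℕ, j < N → (j:ℝ) ≤ J := by
          intro j hj
          have hj' : j ≤ ⌊J⌋₊ := by omega
          calc (j:ℝ) ≤ (⌊J⌋₊:ℝ) := by exact_mod_cast hj'
            _ ≤ J := Nat.floor_le hJ0.le
        have hmain := loop_count (Q := Q) hQcv (f := f) (fstar := fstar) (fslb := fslb)
          (G := G) (M := M) (h := hh) (m := ε'*δ) hMpos hhpos (by positivity) hG
          ⟨zm, hzmQ, hzmf⟩ hgrow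
          (fun j => x i j) (fun j => g i j) N
          (fun j hj => (hmem i j hi (le_of_lt (hjK j hj))).1)
          (fun j hj => (hsub i j hi (hjK j hj)).1)
          (fun j hj => (hsub i j hi (hjK j hj)).2.2.1)
          (fun j hj => by
            have h2 := (hupd i j hi (hjK j hj)).1
            have heq : (if g i j = 0 then (0:ℝ)
                else ε * (f (x i 0) - fslb) / (F * ‖g i j‖ ^ 2))
                = (if g i j = 0 then (0:ℝ) else hh / ‖g i j‖^2) := by
              split_ifs with hgz
              · rfl
              · rw [hF, hhdef, div_div]
            rw [heq] at h2
            exact h2)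
          (fun j hj => by
            have hfail := Hs j (le_of_lt (hjK j hj)) (hjJ j hj)
            linarith)
        have hJs : J = s^2*(G^2*M^2)*(1+ε')^2/ε'^2 := by rw [hJ, ← hssq]
        have hJA : M^2*G^2*Di^2 ≤ J*(hh*(ε'*δ)) := by
          rw [hJs]
          exact keyJA s t ε' G M Di δ hh htpos hs0 hts hε' hδ hDipos hMpos hG hhX hr
        have h5 : (N:ℝ)*(hh*(ε'*δ)) ≤ J*(hh*(ε'*δ)) := le_trans hmain hJA
        have h6 : (N:ℝ) ≤ J := le_of_mul_le_mul_right h5 (by positivity)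
        have h7 : J < (N:ℝ) := by
          rw [hN]
          push_cast
          exact Nat.lt_floor_add_one J
        linarith
  -- summation step
  have hsum_step : ∀ m : ℕ, 1 ≤ m →
      (∑ t' ∈ Finset.Icc 1 m, ((K t').toNat:ℝ))
        = (∑ t' ∈ Finset.Icc 1 (m-1), ((K t').toNat:ℝ)) + ((K m).toNat:ℝ) := by
    intro m hm
    obtain ⟨p, rfl⟩ : ∃ p, m = p + 1 := ⟨m - 1, by omega⟩
    simp only [Nat.add_sub_cancel]
    exact Finset.sum_Icc_succ_top (by omega) _
  -- prefix of regime-A iterations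
  have hprefix : ∀ i : ℕ, 1 ≤ i →
      (∀ t', 1 ≤ t' → t' < i → δ ≤ t^3 * (f (x t' 0) - fslb)) →
      (x i 0 = xb i 0) ∧
      (f (x i 0) - fslb ≤ t^(i-1) * (f (x 1 0) - fslb)) ∧
      (∀ t', 1 ≤ t' → t' < i → ∃ k : ℕ, K t' = (k:ℕ∞) ∧ (k:ℝ) ≤ CA) ∧
      ((∑ t' ∈ Finset.Icc 1 (i-1), ((K t').toNat : ℝ)) ≤ ((i:ℝ)-1) * CA) := by
    intro i
    induction i with
    | zero => intro h; omega
    | succ m ih =>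
      intro hm hAll
      rcases Nat.eq_zero_or_pos m with hm0 | hmpos
      · subst hm0
        refine ⟨by rw [hx10, hxb10], by simp, by omega, ?_⟩
        simp
      · have ihm := ih hmpos (fun t' h1 h2 => hAll t' h1 (by omega))
        obtain ⟨hxeq, hDb, hKlist, hSum⟩ := ihm
        have hAm : δ ≤ t^3*(f (x m 0) - fslb) := hAll m hmpos (by omega)
        obtain ⟨k, hKk, hkCA⟩ := hregA m hmpos hxeq hAm
        obtain ⟨hDdrop, hxeq'⟩ := hdrop m k hmpos hxeq hKk
        have hDnext : f (x (m+1) 0) - fslb ≤ t^m * (f (x 1 0) - fslb) := by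
          have h2 : t*(f (x m 0) - fslb) ≤ t*(t^(m-1)*(f (x 1 0) - fslb)) :=
            mul_le_mul_of_nonneg_left hDb htpos.le
          have h3 : t*(t^(m-1)*(f (x 1 0) - fslb)) = t^m * (f (x 1 0) - fslb) := by
            rw [← mul_assoc, ← pow_succ']
            congr 2
            omega
          linarith
        refine ⟨hxeq', by simpa using hDnext, ?_, ?_⟩
        · intro t' h1 h2
          rcases Nat.lt_succ_iff_lt_or_eq.mp h2 with h3 | h3
          · exact hKlist t' h1 h3
          · subst h3; exact ⟨k, hKk, hkCA⟩
        · have hKmval : ((K m).toNat:ℝ) = (k:ℝ) := by rw [hKk]; simp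
          simp only [Nat.add_sub_cancel]
          rw [hsum_step m hmpos, hKmval]
          have hcast : ((m:ℝ)+1)-1 = ((m:ℝ)-1) + 1 := by ring
          push_cast
          have hm1 : (1:ℝ) ≤ (m:ℝ) := by exact_mod_cast hmpos
          linarith
  -- existence of the first index outside regime A
  have histar : ∃ i : ℕ, 1 ≤ i ∧
      (∀ t', 1 ≤ t' → t' < i → δ ≤ t^3*(f (x t' 0) - fslb)) ∧
      t^3*(f (x i 0) - fslb) < δ := by
    have hPex : ∃ i : ℕ, 1 ≤ i ∧ t^3*(f (x i 0) - fslb) < δ := by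
      by_contra hno
      push_neg at hno
      have hAllA : ∀ i : ℕ, 1 ≤ i → δ ≤ t^3*(f (x i 0) - fslb) := fun i hi => hno i hi
      have ht1 : t < 1 := by
        rw [htdef]
        exact inv_lt_one_of_one_lt₀ hs1'
      have hD1pos : 0 < f (x 1 0) - fslb := hDpos 1 (le_refl 1)
      obtain ⟨m, hmlt⟩ := exists_pow_lt_of_lt_one
        (show 0 < δ/(f (x 1 0) - fslb) by positivity) ht1
      have hDm := (hprefix (m+1) (by omega) (fun t' h1 h2 => hAllA t' h1)).2.1
      have hd : δ ≤ f (x (m+1) 0) - fslb := hDδ (m+1) (by omega)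
      have h2 : t^m * (f (x 1 0) - fslb) < δ := by
        have h3 := (lt_div_iff₀ hD1pos).mp hmlt
        linarith
      simp only [Nat.add_sub_cancel] at hDm
      linarith
    classical
    obtain ⟨i0, hi0⟩ := hPex
    have hex2 : ∃ i : ℕ, 1 ≤ i ∧ t^3*(f (x i 0) - fslb) < δ := ⟨i0, hi0⟩
    let P : ℕ → Prop := fun i => 1 ≤ i ∧ t^3*(f (x i 0) - fslb) < δ
    have hex3 : ∃ i, P i := hex2
    let i1 := Nat.find hex3
    have hspec := Nat.find_spec hex3
    refine ⟨i1, hspec.1, ?_, hspec.2⟩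
    intro t' h1 h2
    have := Nat.find_min hex3 h2
    simp only [P, not_and, not_lt] at this
    exact this h1
  obtain ⟨i1, hi1, hA1, hlt1⟩ := histar
  obtain ⟨hxeq1, hDb1, hKlist1, hSum1⟩ := hprefix i1 hi1 hA1
  set L : ℝ := Real.log ((f (x 1 0) - fslb)/δ) with hLdef
  have hD1pos : 0 < f (x 1 0) - fslb := hDpos 1 (le_refl 1)
  have hLnn : 0 ≤ L := by
    rw [hLdef]
    apply Real.log_nonneg
    rw [le_div_iff₀ hδ]
    linarith [hDδ 1 (le_refl 1)]
  have hlogt : Real.log t = -(1/2) := by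
    rw [htdef, Real.log_inv, hlogs]
  have hcount1 : ((i1:ℝ) - 1) ≤ 2*L := by
    rcases Nat.lt_or_ge i1 2 with h1 | h1
    · have h0 : i1 = 1 := by omega
      rw [h0]; push_cast; linarith
    · set p := i1 - 1 with hp
      have hp1 : 1 ≤ p := by omega
      have hpi : p < i1 := by omega
      have hA1p := hA1 p hp1 hpi
      have hDbp := (hprefix p hp1 (fun u hu1 hu2 => hA1 u hu1 (by omega))).2.1
      have hchain : δ ≤ t^(p+2) * (f (x 1 0) - fslb) := by
        have h2 : t^3*(f (x p 0) - fslb) ≤ t^3*(t^(p-1)*(f (x 1 0) - fslb)) :=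
          mul_le_mul_of_nonneg_left hDbp (by positivity)
        have h3 : t^3*(t^(p-1)*(f (x 1 0) - fslb)) = t^(p+2)*(f (x 1 0) - fslb) := by
          rw [← mul_assoc, ← pow_add]
          congr 2
          omega
        linarith
      have hlog := Real.log_le_log hδ hchain
      rw [Real.log_mul (pow_ne_zero _ (ne_of_gt htpos)) (ne_of_gt hD1pos),
        Real.log_pow, hlogt] at hlog
      have hLval : L = Real.log (f (x 1 0) - fslb) - Real.log δ := by
        rw [hLdef, Real.log_div (ne_of_gt hD1pos) (ne_of_gt hδ)]
      have hpcast : (p:ℝ) = (i1:ℝ) - 1 := by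
        rw [hp, Nat.cast_sub hi1, Nat.cast_one]
      push_cast at hlog
      linarith
  have hKlist1' : ∀ t', 1 ≤ t' → t' < i1 → K t' ≠ ⊤ := by
    intro t' h1 h2
    obtain ⟨k, hk, _⟩ := hKlist1 t' h1 h2
    rw [hk]
    exact ENat.coe_ne_top k
  have hLgoal : Real.log (1 + (f x0 - fstar)/δ) = L := by
    rw [hLdef, ← hx10]
    congr 1
    field_simp
    linarith
  have hJY : J = Real.exp 1*(G^2*M^2)*((1+ε')/ε')^2 := by rw [hJ, div_pow]; ring
  have hfinish : ∀ i jf : ℕ, 1 ≤ i → (jf:ℕ∞) ≤ K i →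
      (∀ t', 1 ≤ t' → t' < i → K t' ≠ ⊤) →
      ((∑ t' ∈ Finset.Icc 1 (i-1), ((K t').toNat:ℝ)) + (jf:ℝ) ≤ ((i1:ℝ)-1)*CA + 3*J) →
      f (x i jf) - fstar ≤ ε'*δ →
      (∃ i j : ℕ, 1 ≤ i ∧ (j : ℕ∞) ≤ K i ∧ (∀ i' : ℕ, 1 ≤ i' → i' < i → K i' ≠ ⊤) ∧
        (2 * ((∑ i' ∈ Finset.Icc 1 (i - 1), (K i').toNat) + j) : ℝ) ≤
          18 * M ^ 2 * G ^ 2 *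
            (2.7 * Real.log (1 + (f x0 - fstar) / δ) + ((1 + ε') / ε') ^ 2) ∧
        (f (x i j) - fstar) / δ ≤ ε') := by
    intro i jf h1 h2 h3 h4 h5
    refine ⟨i, jf, h1, h2, h3, ?_, ?_⟩
    · have hkey := keyFinal G M (((1+ε')/ε')^2) L (Real.exp 1) ((i1:ℝ)-1)
        (by positivity) (by positivity) hLnn hcount1 (by linarith)
      rw [hCA, hJY] at h4
      rw [hLgoal]
      push_cast
      linarith
    · rw [div_le_iff₀ hδ]
      linarith
  have hlow3 : ∀ i : ℕ, 1 ≤ i → x i 0 = xb i 0 →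
      (∀ t', 1 ≤ t' → t' < i → K t' ≠ ⊤) →
      ((∑ t' ∈ Finset.Icc 1 (i-1), ((K t').toNat:ℝ)) ≤ ((i1:ℝ)-1)*CA + 2*J) →
      f (x i 0) - fslb ≤ (1+ε')*s*δ →
      (∃ i j : ℕ, 1 ≤ i ∧ (j : ℕ∞) ≤ K i ∧ (∀ i' : ℕ, 1 ≤ i' → i' < i → K i' ≠ ⊤) ∧
        (2 * ((∑ i' ∈ Finset.Icc 1 (i - 1), (K i').toNat) + j) : ℝ) ≤
          18 * M ^ 2 * G ^ 2 *
            (2.7 * Real.log (1 + (f x0 - fstar) / δ) + ((1 + ε') / ε') ^ 2) ∧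
        (f (x i j) - fstar) / δ ≤ ε') := by
    intro i hi hxeq hKne hSum hup2
    by_cases hc1 : f (x i 0) - fslb ≤ (1+ε')*δ
    · refine hfinish i 0 hi (by simp) hKne ?_ ?_
      · push_cast
        linarith
      · linarith
    · push_neg at hc1
      obtain ⟨jf, hjfK, hjfJ, hjf⟩ := hcaseA i hi hc1 hup2
      rcases hjf with hsucc | hKi
      · exact hfinish i jf hi hjfK hKne (by linarith) hsucc
      · obtain ⟨hDdrop, hxeq'⟩ := hdrop i jf hi hxeq hKi
        have hs1x : t*(f (x i 0) - fslb) ≤ (1+ε')*δ := by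
          have h2 := mul_le_mul_of_nonneg_left hup2 htpos.le
          have h3 : t*((1+ε')*s*δ) = (1+ε')*δ := by
            calc t*((1+ε')*s*δ) = (t*s)*((1+ε')*δ) := by ring
              _ = (1+ε')*δ := by rw [hts, one_mul]
          linarith
        have hsucc1 : f (x (i+1) 0) - fstar ≤ ε'*δ := by linarith
        have hKnext : ∀ t', 1 ≤ t' → t' < i+1 → K t' ≠ ⊤ := by
          intro t' ht1 ht2
          rcases Nat.lt_succ_iff_lt_or_eq.mp ht2 with h3 | h3
          · exact hKne t' ht1 h3
          · subst h3
            rw [hKi]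
            exact ENat.coe_ne_top jf
        refine hfinish (i+1) 0 (by omega) (by simp) hKnext ?_ hsucc1
        have hKival : ((K i).toNat:ℝ) = (jf:ℝ) := by rw [hKi]; simp
        simp only [Nat.add_sub_cancel]
        rw [hsum_step i hi, hKival]
        push_cast
        linarith
  -- final case analysis at i1
  by_cases hb1 : f (x i1 0) - fslb ≤ (1+ε')*s*δ
  · exact hlow3 i1 hi1 hxeq1 hKlist1' (by linarith) hb1
  · push_neg at hb1
    obtain ⟨k1, hK1', hk1J⟩ := hcaseB i1 hi1 hb1
    obtain ⟨hDd1, hxeq2⟩ := hdrop i1 k1 hi1 hxeq1 hK1'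
    have hKne2 : ∀ t', 1 ≤ t' → t' < i1+1 → K t' ≠ ⊤ := by
      intro t' ht1 ht2
      rcases Nat.lt_succ_iff_lt_or_eq.mp ht2 with h3 | h3
      · exact hKlist1' t' ht1 h3
      · subst h3
        rw [hK1']
        exact ENat.coe_ne_top k1
    have hSum2 : (∑ t' ∈ Finset.Icc 1 i1, ((K t').toNat:ℝ)) ≤ ((i1:ℝ)-1)*CA + J := by
      rw [hsum_step i1 hi1]
      have hv : ((K i1).toNat:ℝ) = (k1:ℝ) := by rw [hK1']; simp
      rw [hv]
      linarith
    have hst3 : s^3*t^3 = 1 := by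
      calc s^3*t^3 = (t*s)^3 := by ring
        _ = 1 := by rw [hts]; norm_num
    have hDi1lt : f (x i1 0) - fslb < s^3*δ := by
      have h2 := mul_lt_mul_of_pos_left hlt1 (pow_pos hs0 3)
      calc f (x i1 0) - fslb = (s^3*t^3)*(f (x i1 0) - fslb) := by rw [hst3, one_mul]
        _ = s^3*(t^3*(f (x i1 0) - fslb)) := by ring
        _ < s^3*δ := h2
    have hD2 : f (x (i1+1) 0) - fslb < s^2*δ := by
      have h2 := mul_lt_mul_of_pos_left hDi1lt htpos
      have h3 : t*(s^3*δ) = s^2*δ := by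
        calc t*(s^3*δ) = (t*s)*(s^2*δ) := by ring
          _ = s^2*δ := by rw [hts, one_mul]
      linarith
    by_cases hb2 : f (x (i1+1) 0) - fslb ≤ (1+ε')*s*δ
    · exact hlow3 (i1+1) (by omega) hxeq2 hKne2 (by simpa using (by linarith :
        (∑ t' ∈ Finset.Icc 1 i1, ((K t').toNat:ℝ)) ≤ ((i1:ℝ)-1)*CA + 2*J)) hb2
    · push_neg at hb2
      obtain ⟨k2, hK2', hk2J⟩ := hcaseB (i1+1) (by omega) hb2
      obtain ⟨hDd2, hxeq3⟩ := hdrop (i1+1) k2 (by omega) hxeq2 hK2'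
      have hKne3 : ∀ t', 1 ≤ t' → t' < i1+2 → K t' ≠ ⊤ := by
        intro t' ht1 ht2
        rcases Nat.lt_succ_iff_lt_or_eq.mp ht2 with h3 | h3
        · exact hKne2 t' ht1 h3
        · subst h3
          rw [hK2']
          exact ENat.coe_ne_top k2
      have hSum3 : (∑ t' ∈ Finset.Icc 1 (i1+1), ((K t').toNat:ℝ)) ≤ ((i1:ℝ)-1)*CA + 2*J := by
        rw [hsum_step (i1+1) (by omega)]
        simp only [Nat.add_sub_cancel]
        have hv : ((K (i1+1)).toNat:ℝ) = (k2:ℝ) := by rw [hK2']; simp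
        rw [hv]
        linarith
      have hD3 : f (x (i1+2) 0) - fslb ≤ (1+ε')*s*δ := by
        have h2 := mul_lt_mul_of_pos_left hD2 htpos
        have h3 : t*(s^2*δ) = s*δ := by
          calc t*(s^2*δ) = (t*s)*(s*δ) := by ring
            _ = s*δ := by rw [hts, one_mul]
        linarith [hDd2, mul_pos (mul_pos hε' hs0) hδ]
      exact hlow3 (i1+2) (by omega) hxeq3 hKne3 hSum3 hD3
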